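/- Consider the softmax weights w_j(z) = exp(f_j(z)) / Σ_{j'} exp(f_{j'}(z)) on ℝ^d, where f_j is differentiable. If ‖∇f_j(z) - ∇f_{j'}(z)‖₂ ≤ C for all pairs j, j' and all z, then the gradient of each weight satisfies ‖∇w_j(z)‖₂ ≤ C · w_j(z). -/

import Mathlib

open Real

/-- For softmax weights `w j z = exp (f j z) / ∑ j', exp (f j' z)` with differentiable `f j`,
if the gradients satisfy `‖∇f j z - ∇f j' z‖ ≤ C` for all pairs, then
`‖∇ (w j) z‖ ≤ C * w j z`. -/
theorem stmt_7 {J d : ℕ} (hJ : 0 < J) (f : Fin J → EuclideanSpace ℝ (Fin d) → ℝ)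
    (hf : ∀ j, Differentiable ℝ (f j))
    (C : ℝ) (hC : 0 ≤ C)
    (hgrad : ∀ j j' z, ‖gradient (f j) z - gradient (f j') z‖ ≤ C) :
    ∀ j z, ‖gradient (fun x => Real.exp (f j x) / ∑ j', Real.exp (f j' x)) z‖ ≤
      C * (Real.exp (f j z) / ∑ j', Real.exp (f j' z)) := by
  intro j z
  set F := fun k => fderiv ℝ (f k) z with hF
  set S : ℝ := ∑ k, Real.exp (f k z) with hSdef
  have hSpos : 0 < S := by
    have : Nonempty (Fin J) := ⟨⟨0, hJ⟩⟩
    exact Finset.sum_pos (fun k _ => Real.exp_pos _) Finset.univ_nonempty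
  have hSne : S ≠ 0 := ne_of_gt hSpos
  -- derivative of the sum
  have hSder : HasFDerivAt (fun x => ∑ k, Real.exp (f k x))
      (∑ k, Real.exp (f k z) • F k) z := by
    apply HasFDerivAt.fun_sum
    intro k _
    exact ((hf k z).hasFDerivAt).exp
  have hGder : HasFDerivAt (fun x => Real.exp (f j x)) (Real.exp (f j z) • F j) z :=
    ((hf j z).hasFDerivAt).exp
  -- derivative of the inverse of the sum
  have hinv : HasFDerivAt (fun x => (∑ k, Real.exp (f k x))⁻¹)
      ((-(S ^ 2)⁻¹) • (∑ k, Real.exp (f k z) • F k)) z := by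
    have := (hasDerivAt_inv hSne).comp_hasFDerivAt_of_eq z hSder rfl
    exact this
  -- derivative of the quotient via product rule
  have hW : HasFDerivAt (fun x => Real.exp (f j x) / ∑ k, Real.exp (f k x))
      (Real.exp (f j z) • ((-(S ^ 2)⁻¹) • (∑ k, Real.exp (f k z) • F k)) +
        S⁻¹ • (Real.exp (f j z) • F j)) z := by
    have h := hGder.mul hinv
    have heq : (fun x => Real.exp (f j x) / ∑ k, Real.exp (f k x))
        = fun x => Real.exp (f j x) * (∑ k, Real.exp (f k x))⁻¹ := by
      funext x; rw [div_eq_mul_inv]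
    rw [heq]
    exact h
  set L : EuclideanSpace ℝ (Fin d) →L[ℝ] ℝ :=
    Real.exp (f j z) • ((-(S ^ 2)⁻¹) • (∑ k, Real.exp (f k z) • F k)) +
      S⁻¹ • (Real.exp (f j z) • F j) with hL
  have hfd : fderiv ℝ (fun x => Real.exp (f j x) / ∑ k, Real.exp (f k x)) z = L :=
    hW.fderiv
  clear_value S
  -- rewrite L as a sum of differences
  have hsum1 : ∑ k, Real.exp (f k z) / S = 1 := by
    rw [← Finset.sum_div, ← hSdef, div_self hSne]
  have hLsum : L = ∑ k, ((Real.exp (f j z) / S) * (Real.exp (f k z) / S)) • (F j - F k) := by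
    rw [hL]
    have expand : ∀ k : Fin J, (Real.exp (f j z) / S * (Real.exp (f k z) / S)) • (F j - F k)
        = (Real.exp (f j z) / S * (Real.exp (f k z) / S)) • F j
          - (Real.exp (f j z) / S * (Real.exp (f k z) / S)) • F k := fun k => smul_sub _ _ _
    rw [Finset.sum_congr rfl (fun k _ => expand k), Finset.sum_sub_distrib]
    have h1 : (∑ k, (Real.exp (f j z) / S * (Real.exp (f k z) / S)) • F j)
        = S⁻¹ • (Real.exp (f j z) • F j) := by
      rw [← Finset.sum_smul, ← Finset.mul_sum, hsum1, mul_one, smul_smul]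
      congr 1
      rw [div_eq_inv_mul]
    have h2 : Real.exp (f j z) • (-(S ^ 2)⁻¹) • (∑ k, Real.exp (f k z) • F k)
        = -∑ k, (Real.exp (f j z) / S * (Real.exp (f k z) / S)) • F k := by
      rw [smul_smul, Finset.smul_sum, ← Finset.sum_neg_distrib]
      apply Finset.sum_congr rfl
      intro k _
      rw [smul_smul, ← neg_smul]
      congr 1
      rw [div_mul_div_comm, ← sq, div_eq_mul_inv]
      ring
    rw [h1, h2]
    abel
  -- norm of gradient equals norm of fderiv
  have hng : ‖gradient (fun x => Real.exp (f j x) / ∑ k, Real.exp (f k x)) z‖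
      = ‖L‖ := by
    rw [gradient, hfd]
    exact (InnerProductSpace.toDual ℝ _).symm.norm_map L
  -- bound on differences of fderivs
  have hFd : ∀ k : Fin J, ‖F j - F k‖ ≤ C := by
    intro k
    have := hgrad j k z
    rw [gradient, gradient, ← map_sub] at this
    rwa [(InnerProductSpace.toDual ℝ _).symm.norm_map] at this
  calc ‖gradient (fun x => Real.exp (f j x) / ∑ k, Real.exp (f k x)) z‖
      = ‖∑ k, ((Real.exp (f j z) / S) * (Real.exp (f k z) / S)) • (F j - F k)‖ := by
        rw [hng, hLsum]
    _ ≤ ∑ k, ‖((Real.exp (f j z) / S) * (Real.exp (f k z) / S)) • (F j - F k)‖ :=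
        norm_sum_le _ _
    _ ≤ ∑ k, (Real.exp (f j z) / S) * (Real.exp (f k z) / S) * C := by
        apply Finset.sum_le_sum
        intro k _
        rw [norm_smul, Real.norm_eq_abs, abs_of_nonneg (by positivity)]
        exact mul_le_mul_of_nonneg_left (hFd k) (by positivity)
    _ = C * (Real.exp (f j z) / S) * ∑ k, Real.exp (f k z) / S := by
        rw [Finset.mul_sum]
        apply Finset.sum_congr rfl
        intro k _
        ring
    _ = C * (Real.exp (f j z) / S) := by
        rw [← Finset.sum_div, ← hSdef, div_self hSne, mul_one]
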